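/- Let m > 1 be a real number and let (L_n)_{n≥1} be any sequence of positive real numbers. Then there exist integers 0 < t_1 < u_1 < t_2 < u_2 < t_3 < ⋯ and a sequence (p_n)_{n≥1} with p_n ∈ {1/m, 1}, where p_n = 1/m exactly when t_j ≤ n < u_j for some j, such that, writing K_n = ∏_{k=1}^{t_n} (m·p_k), the following hold for every n: (a) K_n ≥ m^n; (b) u_n − t_n ≥ 2^{−n} K_n and u_n − t_n > L_n; and (c) ∑_{n=1}^∞ ∏_{k=1}^n (m·p_k)^{-1} < ∞. -/

import Mathlib

open Filter

namespace Stmt6Aux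

open Finset


def blk (d l : ℕ → ℕ → ℕ) : ℕ → ℕ × ℕ × ℕ := fun n =>
  Nat.rec ((0 : ℕ), (1 : ℕ), (0 : ℕ))
    (fun j s => (s.2.1 + d j s.2.2, s.2.1 + d j s.2.2 + l j s.2.2, s.2.2 + d j s.2.2)) n

variable (m : ℝ) (d l : ℕ → ℕ → ℕ)

def tt (j : ℕ) : ℕ := (blk d l j).1
def uu (j : ℕ) : ℕ := (blk d l j).2.1
def ee (j : ℕ) : ℕ := (blk d l j).2.2

lemma tt_zero : tt d l 0 = 0 := rfl
lemma uu_zero : uu d l 0 = 1 := rfl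
lemma ee_zero : ee d l 0 = 0 := rfl
lemma tt_succ (j : ℕ) : tt d l (j + 1) = uu d l j + d j (ee d l j) := rfl
lemma uu_succ (j : ℕ) : uu d l (j + 1) = uu d l j + d j (ee d l j) + l j (ee d l j) := rfl
lemma ee_succ (j : ℕ) : ee d l (j + 1) = ee d l j + d j (ee d l j) := rfl

def killf (n : ℕ) : Prop := ∃ j, 1 ≤ j ∧ tt d l j ≤ n ∧ n < uu d l j

open Classical in
noncomputable def pf (n : ℕ) : ℝ := if killf d l n then 1 / m else 1

noncomputable def PP (N : ℕ) : ℝ := ∏ k ∈ Icc 1 N, (m * pf m d l k)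

section
lemma tt_lt_uu (hl1 : ∀ j e, 1 ≤ l j e) (j : ℕ) : tt d l j < uu d l j := by
  cases j with
  | zero => simp [tt_zero, uu_zero]
  | succ j => rw [tt_succ, uu_succ]; have := hl1 j (ee d l j); omega

lemma uu_lt_tt (hd1 : ∀ j e, 1 ≤ d j e) (j : ℕ) : uu d l j < tt d l (j + 1) := by
  rw [tt_succ]; have := hd1 j (ee d l j); omega

lemma uu_mono (hd1 : ∀ j e, 1 ≤ d j e) (hl1 : ∀ j e, 1 ≤ l j e) : StrictMono (uu d l) :=
  strictMono_nat_of_lt_succ fun j =>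
    lt_trans (uu_lt_tt d l hd1 j) (tt_lt_uu d l hl1 (j + 1))

lemma tt_mono (hd1 : ∀ j e, 1 ≤ d j e) (hl1 : ∀ j e, 1 ≤ l j e) : StrictMono (tt d l) :=
  strictMono_nat_of_lt_succ fun j =>
    lt_trans (tt_lt_uu d l hl1 j) (uu_lt_tt d l hd1 j)

lemma not_killf (hd1 : ∀ j e, 1 ≤ d j e) (hl1 : ∀ j e, 1 ≤ l j e) {j n : ℕ} (h1 : uu d l j ≤ n) (h2 : n < tt d l (j + 1)) :
    ¬ killf d l n := by
  rintro ⟨i, hi1, hti, hui⟩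
  rcases le_or_gt i j with h | h
  · have := (uu_mono d l hd1 hl1).monotone h
    omega
  · have := (tt_mono d l hd1 hl1).monotone (show j + 1 ≤ i by omega)
    omega

end

section
lemma mul_pf_of_not {n : ℕ} (h : ¬ killf d l n) : m * pf m d l n = m := by
  rw [pf, if_neg h, mul_one]

lemma mul_pf_of_kill (hm : m ≠ 0) {n : ℕ} (h : killf d l n) : m * pf m d l n = 1 := by
  rw [pf, if_pos h]; field_simp

lemma mul_pf_pos (hm : 1 < m) (n : ℕ) : 0 < m * pf m d l n := by
  have hm0 : (0:ℝ) < m := lt_trans one_pos hm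
  rw [pf]
  split
  · rw [mul_one_div, div_self (ne_of_gt hm0)]; norm_num
  · simpa using hm0

lemma PP_split {a b : ℕ} (h : a ≤ b) :
    PP m d l b = PP m d l a * ∏ k ∈ Ioc a b, (m * pf m d l k) := by
  have e1 : ∀ c : ℕ, Icc 1 c = Ioc 0 c := by
    intro c; ext x; simp only [mem_Icc, mem_Ioc]; omega
  rw [PP, PP, e1, e1, ← Finset.prod_Ioc_consecutive _ (Nat.zero_le a) h]

lemma prod_Ioc_grow {a b : ℕ} (hgrow : ∀ k, a < k → k ≤ b → ¬ killf d l k) :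
    ∏ k ∈ Ioc a b, (m * pf m d l k) = m ^ (b - a) := by
  have : ∀ k ∈ Ioc a b, m * pf m d l k = m := by
    intro k hk
    rw [mem_Ioc] at hk
    exact mul_pf_of_not m d l (hgrow k hk.1 hk.2)
  rw [Finset.prod_congr rfl this, Finset.prod_const, Nat.card_Ioc]

lemma prod_Ioc_kill (hm : m ≠ 0) {a b : ℕ} (hk : ∀ k, a < k → k ≤ b → killf d l k) :
    ∏ k ∈ Ioc a b, (m * pf m d l k) = 1 := by
  have : ∀ k ∈ Ioc a b, m * pf m d l k = 1 := by
    intro k hko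
    rw [mem_Ioc] at hko
    exact mul_pf_of_kill m d l hm (hk k hko.1 hko.2)
  rw [Finset.prod_congr rfl this, Finset.prod_const_one]

lemma PP_pos (hm : 1 < m) (N : ℕ) : 0 < PP m d l N :=
  Finset.prod_pos fun k _ => mul_pf_pos m d l hm k

end

/-- geometric sum bound -/
lemma geom_bound {r : ℝ} (h0 : 0 ≤ r) (h1 : r < 1) (N : ℕ) :
    ∑ i ∈ Finset.range N, r ^ i ≤ (1 - r)⁻¹ := by
  rw [geom_sum_eq (ne_of_lt h1)]
  have h2 : (0:ℝ) < 1 - r := by linarith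
  have h3 : (r ^ N - 1) / (r - 1) = (1 - r ^ N) / (1 - r) := by
    rw [div_eq_div_iff (by linarith) (by linarith)]; ring
  rw [h3, ← one_div]
  have h4 : 1 - r ^ N ≤ 1 := by nlinarith [pow_nonneg h0 N]
  exact (div_le_div_iff_of_pos_right h2).mpr h4

end Stmt6Aux

open Stmt6Aux

/-- **the deterministic construction.** Let `m > 1` and let
`(L_n)_{n ≥ 1}` be positive reals.  Then there are integers
`0 < t_1 < u_1 < t_2 < u_2 < ⋯` and a sequence `(p_n)_{n ≥ 1}` with
`p_n ∈ {1/m, 1}`, where `p_n = 1/m` exactly when `t_j ≤ n < u_j` for some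
`j ≥ 1`, such that, writing `K_n = ∏_{k=1}^{t_n} (m p_k)`, for every `n ≥ 1`:
(a) `K_n ≥ m^n`; (b) `u_n - t_n ≥ 2^{-n} K_n` and `u_n - t_n > L_n`;
and (c) `∑_n ∏_{k=1}^n (m p_k)⁻¹ < ∞`. -/
theorem stmt6 (m : ℝ) (hm : 1 < m) (L : ℕ → ℝ) (hL : ∀ n ≥ 1, 0 < L n) :
    ∃ (t u : ℕ → ℕ) (p : ℕ → ℝ),
      0 < t 1 ∧
      (∀ j ≥ 1, t j < u j ∧ u j < t (j + 1)) ∧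
      (∀ n ≥ 1, p n = 1 / m ∨ p n = 1) ∧
      (∀ n ≥ 1, (p n = 1 / m ↔ ∃ j ≥ 1, t j ≤ n ∧ n < u j)) ∧
      (∀ n ≥ 1,
        m ^ n ≤ ∏ k ∈ Finset.Icc 1 (t n), (m * p k) ∧
        (∏ k ∈ Finset.Icc 1 (t n), (m * p k)) / 2 ^ n ≤ (u n : ℝ) - (t n : ℝ) ∧
        L n < (u n : ℝ) - (t n : ℝ)) ∧
      Summable (fun n => ∏ k ∈ Finset.Icc 1 n, (m * p k)⁻¹) := by
  classical
  have hm0 : (0:ℝ) < m := lt_trans one_pos hm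
  have hmne : m ≠ 0 := ne_of_gt hm0
  have hm1 : (1:ℝ) ≤ m := le_of_lt hm
  have hminv0 : (0:ℝ) ≤ m⁻¹ := by positivity
  have hminv1 : m⁻¹ < 1 := by rw [← one_div, div_lt_one hm0]; exact hm
  -- existence of the step choices
  have hex : ∀ j e : ℕ, ∃ dd ll : ℕ,
      1 ≤ dd ∧ 1 ≤ ll ∧
      m ^ (j + 1) ≤ m ^ (e + dd) ∧
      (2:ℝ) ^ (j + 1) ≤ m ^ (e + dd) ∧
      m ^ (e + dd) / 2 ^ (j + 1) ≤ (ll : ℝ) ∧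
      L (j + 1) < (ll : ℝ) ∧
      ((ll : ℝ) + 1) * 2 ^ (j + 1) ≤ 5 * m ^ (e + dd) := by
    intro j e
    have hL1 : 0 < L (j + 1) := hL (j + 1) (by omega)
    have h2p : (0:ℝ) < 2 ^ (j + 1) := by positivity
    obtain ⟨d0, hd0⟩ := pow_unbounded_of_one_lt
      (max (m ^ (j + 1)) (2 ^ (j + 1) * (L (j + 1) + 4))) hm
    have hKd0 : m ^ d0 ≤ m ^ (e + (d0 + 1)) := by
      apply pow_le_pow_right₀ hm1; omega
    have hKa : m ^ (j + 1) ≤ m ^ (e + (d0 + 1)) :=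
      le_trans (le_trans (le_max_left _ _) (le_of_lt hd0)) hKd0
    have hKb : 2 ^ (j + 1) * (L (j + 1) + 4) ≤ m ^ (e + (d0 + 1)) :=
      le_trans (le_trans (le_max_right _ _) (le_of_lt hd0)) hKd0
    have hK0 : (0:ℝ) < m ^ (e + (d0 + 1)) := pow_pos hm0 _
    have hc1 : (⌈m ^ (e + (d0 + 1)) / 2 ^ (j + 1)⌉₊ : ℝ) <
        m ^ (e + (d0 + 1)) / 2 ^ (j + 1) + 1 := Nat.ceil_lt_add_one (by positivity)
    have hc2 : (⌈L (j + 1)⌉₊ : ℝ) < L (j + 1) + 1 := Nat.ceil_lt_add_one (le_of_lt hL1)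
    have hc1' := Nat.le_ceil (m ^ (e + (d0 + 1)) / 2 ^ (j + 1))
    have hc2' := Nat.le_ceil (L (j + 1))
    have hdiv : m ^ (e + (d0 + 1)) / 2 ^ (j + 1) * 2 ^ (j + 1) = m ^ (e + (d0 + 1)) :=
      div_mul_cancel₀ _ (ne_of_gt h2p)
    refine ⟨d0 + 1, ⌈m ^ (e + (d0 + 1)) / 2 ^ (j + 1)⌉₊ + ⌈L (j + 1)⌉₊ + 1,
      by omega, by omega, hKa, by nlinarith, ?_, ?_, ?_⟩
    · push_cast; linarith
    · push_cast; linarith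
    · have key : ((⌈m ^ (e + (d0 + 1)) / 2 ^ (j + 1)⌉₊ : ℝ) + (⌈L (j + 1)⌉₊ : ℝ) + 2) * 2 ^ (j + 1)
          ≤ (m ^ (e + (d0 + 1)) / 2 ^ (j + 1) + L (j + 1) + 4) * 2 ^ (j + 1) := by
        apply mul_le_mul_of_nonneg_right (by linarith) (le_of_lt h2p)
      have key2 : (m ^ (e + (d0 + 1)) / 2 ^ (j + 1) + L (j + 1) + 4) * 2 ^ (j + 1)
          = m ^ (e + (d0 + 1)) + (L (j + 1) + 4) * 2 ^ (j + 1) := by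
        rw [add_mul, add_mul, hdiv]; ring
      push_cast
      rw [key2] at key
      have key3 : (L (j + 1) + 4) * 2 ^ (j + 1) ≤ m ^ (e + (d0 + 1)) := by
        rw [mul_comm]; exact hKb
      linarith
  choose d l hd1 hl1 hKm hK2 hlK hlL hl5 using hex
  -- basic structure
  have h_tu : ∀ j, tt d l j < uu d l j := tt_lt_uu d l hl1
  have h_ut : ∀ j, uu d l j < tt d l (j + 1) := uu_lt_tt d l hd1
  have humono := uu_mono d l hd1 hl1
  have htmono := tt_mono d l hd1 hl1
  have h_u1 : ∀ j, 1 ≤ uu d l j := by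
    intro j
    have h1 : uu d l 0 ≤ uu d l j := humono.monotone (Nat.zero_le j)
    rw [uu_zero] at h1; omega
  have h_ee : ∀ j, j ≤ ee d l j := by
    intro j
    induction j with
    | zero => simp [ee_zero]
    | succ j ih => rw [ee_succ]; have := hd1 j (ee d l j); omega
  -- the main product values
  have hPu : ∀ j, PP m d l (uu d l j) = m ^ (ee d l j + 1) := by
    intro j
    induction j with
    | zero =>
      have ht1 : uu d l 0 < tt d l (0 + 1) := h_ut 0
      rw [uu_zero] at ht1
      have h1 : ¬ killf d l 1 :=
        not_killf d l hd1 hl1 (j := 0) (le_of_eq (uu_zero d l)) ht1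
      rw [uu_zero, ee_zero, PP]
      rw [Finset.Icc_self, Finset.prod_singleton, mul_pf_of_not m d l h1, pow_one]
    | succ j ih =>
      have hu1 := h_u1 j
      have hu1' := h_u1 (j + 1)
      have hut := h_ut j
      have htu' := h_tu (j + 1)
      have hut' := h_ut (j + 1)
      have e0 : uu d l j ≤ tt d l (j + 1) - 1 := by omega
      have e1 : tt d l (j + 1) - 1 ≤ uu d l (j + 1) - 1 := by omega
      have e2 : uu d l (j + 1) - 1 ≤ uu d l (j + 1) := by omega
      have hg1 : ∏ k ∈ Finset.Ioc (uu d l j) (tt d l (j + 1) - 1), (m * pf m d l k)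
          = m ^ ((tt d l (j + 1) - 1) - uu d l j) :=
        prod_Ioc_grow m d l fun k hk1 hk2 =>
          not_killf d l hd1 hl1 (le_of_lt hk1) (by omega)
      have hk1 : ∏ k ∈ Finset.Ioc (tt d l (j + 1) - 1) (uu d l (j + 1) - 1), (m * pf m d l k)
          = 1 :=
        prod_Ioc_kill m d l hmne fun k hh1 hh2 => ⟨j + 1, by omega, by omega, by omega⟩
      have hg2 : ∏ k ∈ Finset.Ioc (uu d l (j + 1) - 1) (uu d l (j + 1)), (m * pf m d l k)
          = m ^ (uu d l (j + 1) - (uu d l (j + 1) - 1)) :=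
        prod_Ioc_grow m d l fun k hk1 hk2 =>
          not_killf d l hd1 hl1 (j := j + 1) (by omega) (by omega)
      rw [PP_split m d l (show uu d l j ≤ uu d l (j + 1) by omega),
          ← Finset.prod_Ioc_consecutive (fun k => m * pf m d l k) e0 (le_trans e1 e2),
          ← Finset.prod_Ioc_consecutive (fun k => m * pf m d l k) e1 e2,
          ih, hg1, hk1, hg2, one_mul, ← pow_add, ← pow_add, ee_succ, tt_succ]
      congr 1
      have := hd1 j (ee d l j); omega
  have hPgrow : ∀ j n, uu d l j ≤ n → n < tt d l (j + 1) →
      PP m d l n = m ^ (ee d l j + 1 + (n - uu d l j)) := by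
    intro j n h1 h2
    have hg : ∏ k ∈ Finset.Ioc (uu d l j) n, (m * pf m d l k) = m ^ (n - uu d l j) :=
      prod_Ioc_grow m d l fun k hk1 hk2 =>
        not_killf d l hd1 hl1 (le_of_lt hk1) (by omega)
    rw [PP_split m d l h1, hPu j, hg, ← pow_add]
  have hPt : ∀ j, PP m d l (tt d l (j + 1)) = m ^ (ee d l (j + 1)) := by
    intro j
    have hu1 := h_u1 j
    have hut := h_ut j
    have htu' := h_tu (j + 1)
    have e1 : uu d l j ≤ tt d l (j + 1) - 1 := by omega
    have e2 : tt d l (j + 1) - 1 ≤ tt d l (j + 1) := by omega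
    have hg : PP m d l (tt d l (j + 1) - 1)
        = m ^ (ee d l j + 1 + ((tt d l (j + 1) - 1) - uu d l j)) :=
      hPgrow j _ e1 (by omega)
    have hk : ∏ k ∈ Finset.Ioc (tt d l (j + 1) - 1) (tt d l (j + 1)), (m * pf m d l k) = 1 :=
      prod_Ioc_kill m d l hmne fun k hh1 hh2 => ⟨j + 1, by omega, by omega, by omega⟩
    rw [PP_split m d l e2, hg, hk, mul_one, ee_succ, tt_succ]
    congr 1
    have := hd1 j (ee d l j); omega
  have hPkill : ∀ j n, tt d l (j + 1) ≤ n → n < uu d l (j + 1) →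
      PP m d l n = m ^ (ee d l (j + 1)) := by
    intro j n h1 h2
    have hk : ∏ k ∈ Finset.Ioc (tt d l (j + 1)) n, (m * pf m d l k) = 1 :=
      prod_Ioc_kill m d l hmne fun k hk1 hk2 => ⟨j + 1, by omega, by omega, by omega⟩
    rw [PP_split m d l h1, hPt j, hk, mul_one]
  -- geometric estimates
  have hgeo1 : ∀ a b : ℕ, ∑ n ∈ Finset.Ioc a b, m⁻¹ ^ (n - a) ≤ (1 - m⁻¹)⁻¹ := by
    intro a b
    have h1 : Finset.Ioc a b = Finset.Ico (a + 1) (b + 1) := by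
      ext x; simp only [Finset.mem_Ioc, Finset.mem_Ico]; omega
    rw [h1, Finset.sum_Ico_eq_sum_range]
    calc ∑ i ∈ Finset.range (b + 1 - (a + 1)), m⁻¹ ^ (a + 1 + i - a)
        ≤ ∑ i ∈ Finset.range (b + 1 - (a + 1)), m⁻¹ ^ i := by
          apply Finset.sum_le_sum
          intro i _
          exact pow_le_pow_of_le_one hminv0 (le_of_lt hminv1) (by omega)
      _ ≤ (1 - m⁻¹)⁻¹ := geom_bound hminv0 hminv1 _
  have c1pos : (0:ℝ) ≤ (1 - m⁻¹)⁻¹ := by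
    have : (0:ℝ) < 1 - m⁻¹ := by linarith
    positivity
  have hblock : ∀ j, ∑ n ∈ Finset.Ioc (uu d l j) (uu d l (j + 1)), (PP m d l n)⁻¹ ≤
      (1 - m⁻¹)⁻¹ * m⁻¹ ^ (j + 1) + 5 * (2⁻¹:ℝ) ^ (j + 1) := by
    intro j
    have hu1 := h_u1 j
    have hu1' := h_u1 (j + 1)
    have hut := h_ut j
    have htu' := h_tu (j + 1)
    have hut' := h_ut (j + 1)
    have e0 : uu d l j ≤ tt d l (j + 1) - 1 := by omega
    have e2 : tt d l (j + 1) - 1 ≤ uu d l (j + 1) := by omega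
    rw [← Finset.sum_Ioc_consecutive (fun n => (PP m d l n)⁻¹) e0 e2]
    have part1 : ∑ n ∈ Finset.Ioc (uu d l j) (tt d l (j + 1) - 1), (PP m d l n)⁻¹ ≤
        (1 - m⁻¹)⁻¹ * m⁻¹ ^ (j + 1) := by
      have heq : ∀ n ∈ Finset.Ioc (uu d l j) (tt d l (j + 1) - 1),
          (PP m d l n)⁻¹ = m⁻¹ ^ (ee d l j + 1) * m⁻¹ ^ (n - uu d l j) := by
        intro n hn
        rw [Finset.mem_Ioc] at hn
        rw [hPgrow j n (le_of_lt hn.1) (by omega), ← inv_pow, pow_add]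
      rw [Finset.sum_congr rfl heq, ← Finset.mul_sum]
      calc m⁻¹ ^ (ee d l j + 1) * ∑ n ∈ Finset.Ioc (uu d l j) (tt d l (j + 1) - 1),
              m⁻¹ ^ (n - uu d l j)
          ≤ m⁻¹ ^ (j + 1) * (1 - m⁻¹)⁻¹ := by
            apply mul_le_mul ?_ (hgeo1 _ _) ?_ (by positivity)
            · apply pow_le_pow_of_le_one hminv0 (le_of_lt hminv1)
              have := h_ee j; omega
            · apply Finset.sum_nonneg
              intro n _
              positivity
        _ = (1 - m⁻¹)⁻¹ * m⁻¹ ^ (j + 1) := mul_comm _ _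
    have part2 : ∑ n ∈ Finset.Ioc (tt d l (j + 1) - 1) (uu d l (j + 1)), (PP m d l n)⁻¹ ≤
        5 * (2⁻¹:ℝ) ^ (j + 1) := by
      have hE0 : (0:ℝ) < m ^ ee d l (j + 1) := pow_pos hm0 _
      have hEne : m ^ ee d l (j + 1) ≠ 0 := ne_of_gt hE0
      have h2p : (0:ℝ) < 2 ^ (j + 1) := by positivity
      have hbound : ∀ n ∈ Finset.Ioc (tt d l (j + 1) - 1) (uu d l (j + 1)),
          (PP m d l n)⁻¹ ≤ (m ^ ee d l (j + 1))⁻¹ := by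
        intro n hn
        rw [Finset.mem_Ioc] at hn
        rcases eq_or_lt_of_le hn.2 with he | hlt
        · rw [he, hPu (j + 1)]
          apply inv_anti₀ hE0
          apply pow_le_pow_right₀ hm1; omega
        · rw [hPkill j n (by omega) hlt]
      have hcard : uu d l (j + 1) - (tt d l (j + 1) - 1) = l j (ee d l j) + 1 := by
        have h5 : uu d l (j + 1) = tt d l (j + 1) + l j (ee d l j) := by
          rw [uu_succ, tt_succ]
        omega
      have h5 := hl5 j (ee d l j)
      rw [← ee_succ] at h5
      have hh := mul_le_mul_of_nonneg_right h5 (inv_nonneg.mpr (le_of_lt h2p))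
      rw [mul_assoc, mul_inv_cancel₀ (ne_of_gt h2p), mul_one] at hh
      calc ∑ n ∈ Finset.Ioc (tt d l (j + 1) - 1) (uu d l (j + 1)), (PP m d l n)⁻¹
          ≤ (Finset.Ioc (tt d l (j + 1) - 1) (uu d l (j + 1))).card •
              (m ^ ee d l (j + 1))⁻¹ := Finset.sum_le_card_nsmul _ _ _ hbound
        _ = ((l j (ee d l j) : ℝ) + 1) * (m ^ ee d l (j + 1))⁻¹ := by
            rw [Nat.card_Ioc, hcard, nsmul_eq_mul]
            push_cast; ring
        _ ≤ (5 * m ^ ee d l (j + 1) * (2 ^ (j + 1) : ℝ)⁻¹) * (m ^ ee d l (j + 1))⁻¹ := by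
            apply mul_le_mul_of_nonneg_right hh (by positivity)
        _ = 5 * (2 ^ (j + 1) : ℝ)⁻¹ := by field_simp
        _ = 5 * (2⁻¹:ℝ) ^ (j + 1) := by rw [← inv_pow]
    exact add_le_add part1 part2
  -- total partial-sum bound
  have htot : ∀ J, ∑ n ∈ Finset.Ioc 0 (uu d l J), (PP m d l n)⁻¹ ≤
      m⁻¹ + ∑ i ∈ Finset.range J,
        ((1 - m⁻¹)⁻¹ * m⁻¹ ^ (i + 1) + 5 * (2⁻¹:ℝ) ^ (i + 1)) := by
    intro J
    induction J with
    | zero =>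
      rw [uu_zero]
      rw [show Finset.Ioc (0:ℕ) 1 = {1} from by
        ext x; simp only [Finset.mem_Ioc, Finset.mem_singleton]; omega,
        Finset.sum_singleton]
      have h1 : PP m d l 1 = m ^ 1 := by
        have h2 := hPu 0
        rwa [uu_zero, ee_zero, zero_add] at h2
      rw [h1, pow_one]
      simp
    | succ J ih =>
      rw [← Finset.sum_Ioc_consecutive (fun n => (PP m d l n)⁻¹) (Nat.zero_le (uu d l J))
          (le_of_lt (humono (Nat.lt_succ_self J))), Finset.sum_range_succ]
      have hb := hblock J
      linarith
  have hCg : ∀ J, ∑ i ∈ Finset.range J,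
      ((1 - m⁻¹)⁻¹ * m⁻¹ ^ (i + 1) + 5 * (2⁻¹:ℝ) ^ (i + 1)) ≤
      (1 - m⁻¹)⁻¹ * (1 - m⁻¹)⁻¹ + 5 * ((1:ℝ) - 2⁻¹)⁻¹ := by
    intro J
    rw [Finset.sum_add_distrib, ← Finset.mul_sum, ← Finset.mul_sum]
    have g1 : ∑ i ∈ Finset.range J, m⁻¹ ^ (i + 1) ≤ (1 - m⁻¹)⁻¹ := by
      calc ∑ i ∈ Finset.range J, m⁻¹ ^ (i + 1) ≤ ∑ i ∈ Finset.range J, m⁻¹ ^ i :=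
            Finset.sum_le_sum fun i _ =>
              pow_le_pow_of_le_one hminv0 (le_of_lt hminv1) (by omega)
        _ ≤ (1 - m⁻¹)⁻¹ := geom_bound hminv0 hminv1 _
    have g2 : ∑ i ∈ Finset.range J, (2⁻¹:ℝ) ^ (i + 1) ≤ ((1:ℝ) - 2⁻¹)⁻¹ := by
      calc ∑ i ∈ Finset.range J, (2⁻¹:ℝ) ^ (i + 1) ≤ ∑ i ∈ Finset.range J, (2⁻¹:ℝ) ^ i :=
            Finset.sum_le_sum fun i _ =>
              pow_le_pow_of_le_one (by norm_num) (by norm_num) (by omega)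
        _ ≤ ((1:ℝ) - 2⁻¹)⁻¹ := geom_bound (by norm_num) (by norm_num) _
    have h1 := mul_le_mul_of_nonneg_left g1 c1pos
    linarith
  -- summability
  have hfP : ∀ n, ∏ k ∈ Finset.Icc 1 n, (m * pf m d l k)⁻¹ = (PP m d l n)⁻¹ := fun n =>
    Finset.prod_inv_distrib _
  have hfnonneg : ∀ n, 0 ≤ ∏ k ∈ Finset.Icc 1 n, (m * pf m d l k)⁻¹ := by
    intro n
    rw [hfP]
    exact inv_nonneg.mpr (le_of_lt (PP_pos m d l hm n))
  have hsummable : Summable (fun n => ∏ k ∈ Finset.Icc 1 n, (m * pf m d l k)⁻¹) := by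
    apply summable_of_sum_range_le (c := 1 + (m⁻¹ +
      ((1 - m⁻¹)⁻¹ * (1 - m⁻¹)⁻¹ + 5 * ((1:ℝ) - 2⁻¹)⁻¹))) hfnonneg
    intro N
    have hNu : N ≤ uu d l N := humono.le_apply
    have hsub : Finset.range N ⊆ Finset.range (uu d l N + 1) :=
      Finset.range_subset_range.mpr (by omega)
    have mono : ∑ i ∈ Finset.range N, ∏ k ∈ Finset.Icc 1 i, (m * pf m d l k)⁻¹
        ≤ ∑ i ∈ Finset.range (uu d l N + 1), ∏ k ∈ Finset.Icc 1 i, (m * pf m d l k)⁻¹ :=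
      Finset.sum_le_sum_of_subset_of_nonneg hsub fun i _ _ => hfnonneg i
    have hins : Finset.range (uu d l N + 1) = insert 0 (Finset.Ioc 0 (uu d l N)) := by
      ext x; simp only [Finset.mem_range, Finset.mem_insert, Finset.mem_Ioc]; omega
    have hzero : ∏ k ∈ Finset.Icc 1 0, (m * pf m d l k)⁻¹ = 1 := by
      rw [Finset.Icc_eq_empty (by omega), Finset.prod_empty]
    have hsum2 : ∑ i ∈ Finset.range (uu d l N + 1), ∏ k ∈ Finset.Icc 1 i, (m * pf m d l k)⁻¹
        = 1 + ∑ n ∈ Finset.Ioc 0 (uu d l N), (PP m d l n)⁻¹ := by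
      rw [hins, Finset.sum_insert (by simp), hzero]
      congr 1
      exact Finset.sum_congr rfl fun n _ => hfP n
    have h3 := htot N
    have h4 := hCg N
    calc ∑ i ∈ Finset.range N, ∏ k ∈ Finset.Icc 1 i, (m * pf m d l k)⁻¹
        ≤ ∑ i ∈ Finset.range (uu d l N + 1), ∏ k ∈ Finset.Icc 1 i, (m * pf m d l k)⁻¹ := mono
      _ = 1 + ∑ n ∈ Finset.Ioc 0 (uu d l N), (PP m d l n)⁻¹ := hsum2
      _ ≤ 1 + (m⁻¹ + ((1 - m⁻¹)⁻¹ * (1 - m⁻¹)⁻¹ + 5 * ((1:ℝ) - 2⁻¹)⁻¹)) := by linarith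
  -- conclusion
  refine ⟨tt d l, uu d l, pf m d l, ?_, ?_, ?_, ?_, ?_, hsummable⟩
  · have h1 : uu d l 0 < tt d l 1 := h_ut 0
    have h2 : uu d l 0 = 1 := uu_zero d l
    omega
  · intro j _
    exact ⟨h_tu j, h_ut j⟩
  · intro n _
    by_cases h : killf d l n
    · left; rw [pf, if_pos h]
    · right; rw [pf, if_neg h]
  · intro n _
    have hiff : killf d l n ↔ ∃ j ≥ 1, tt d l j ≤ n ∧ n < uu d l j := Iff.rfl
    rw [← hiff]
    constructor
    · intro hp
      by_contra hk
      rw [pf, if_neg hk] at hp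
      have hlt : 1 / m < 1 := by rw [div_lt_one hm0]; exact hm
      linarith
    · intro hk; rw [pf, if_pos hk]
  · intro n hn
    obtain ⟨j, rfl⟩ : ∃ j, n = j + 1 := ⟨n - 1, by omega⟩
    have hPP : ∏ k ∈ Finset.Icc 1 (tt d l (j + 1)), (m * pf m d l k)
        = m ^ ee d l (j + 1) := hPt j
    have hlen : uu d l (j + 1) = tt d l (j + 1) + l j (ee d l j) := by
      rw [uu_succ, tt_succ]
    refine ⟨?_, ?_, ?_⟩
    · rw [hPP]
      have h1 := hKm j (ee d l j)
      rwa [← ee_succ] at h1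
    · rw [hPP]
      have h1 := hlK j (ee d l j)
      rw [← ee_succ] at h1
      rw [hlen]
      push_cast
      linarith
    · have h1 := hlL j (ee d l j)
      rw [hlen]
      push_cast
      linarith
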